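/- For every probability measure π on Ω whose Kullback–Leibler divergence from μ is finite, one has ∫ Q dπ − λ * (KL(π‖μ)).toReal ≤ λ * Real.log Z, where Z = ∫ Real.exp (Q ω / λ) ∂μ. -/

import Mathlib

open MeasureTheory

lemma integral_llr_nonneg' {Ω : Type*} [MeasurableSpace Ω]
    (π ν : Measure Ω) [IsProbabilityMeasure π] [IsProbabilityMeasure ν]
    (hac : π ≪ ν) (hint : Integrable (llr π ν) π) :
    0 ≤ ∫ ω, llr π ν ω ∂π := by
  have h_int_rn : Integrable (fun x ↦ (ν.rnDeriv π x).toReal) π :=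
    Measure.integrable_toReal_rnDeriv
  have h_le : ∫ ω, - llr π ν ω ∂π ≤ ∫ ω, (ν.rnDeriv π ω).toReal - 1 ∂π := by
    refine integral_mono_ae hint.neg (h_int_rn.sub (integrable_const 1)) ?_
    filter_upwards [exp_neg_llr hac] with x hx
    have := Real.add_one_le_exp (- llr π ν x)
    rw [hx] at this
    linarith
  have h_rn_le : ∫ ω, (ν.rnDeriv π ω).toReal ∂π ≤ 1 := by
    have := Measure.setIntegral_toReal_rnDeriv_le (μ := ν) (ν := π)
      (s := Set.univ) (measure_ne_top ν _)
    simpa using this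
  rw [integral_neg] at h_le
  rw [integral_sub h_int_rn (integrable_const 1)] at h_le
  simp only [integral_const, measure_univ, probReal_univ, ENNReal.toReal_one, smul_eq_mul, one_mul] at h_le
  linarith

open Classical in
/-- The Kullback–Leibler divergence of `π` from `μ`, valued in `[0,∞]`: the integral of the
logarithm of the Radon–Nikodym density when `π ≪ μ` with integrable log-density, and `∞`
otherwise. -/
noncomputable def klDiv {Ω : Type*} [MeasurableSpace Ω] (π μ : Measure Ω) : ENNReal :=
  if π ≪ μ ∧ Integrable (llr π μ) π then ENNReal.ofReal (∫ ω, llr π μ ω ∂π) else ⊤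

/-- For every probability measure `π` with finite Kullback–Leibler divergence from the
reference probability measure `μ`, the KL-regularized objective is bounded by the log-partition
function: `∫ Q dπ − λ * KL(π‖μ) ≤ λ * log Z` with `Z = ∫ exp (Q ω / λ) ∂μ`. -/
theorem integral_sub_klDiv_le_log_partition
    {Ω : Type*} [MeasurableSpace Ω]
    (μ : Measure Ω) [IsProbabilityMeasure μ]
    (Q : Ω → ℝ) (hQmeas : Measurable Q) (C : ℝ) (hQbdd : ∀ ω, |Q ω| ≤ C)
    (lam : ℝ) (hlam : 0 < lam)
    (π : Measure Ω) [IsProbabilityMeasure π] (hKL : klDiv π μ ≠ ⊤) :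
    (∫ ω, Q ω ∂π) - lam * (klDiv π μ).toReal
      ≤ lam * Real.log (∫ ω, Real.exp (Q ω / lam) ∂μ) := by
  classical
  have hcond : π ≪ μ ∧ Integrable (llr π μ) π := by
    by_contra h
    simp [klDiv, h] at hKL
  obtain ⟨hac, hint⟩ := hcond
  have hKLval : (klDiv π μ).toReal = ∫ ω, llr π μ ω ∂π := by
    rw [klDiv, if_pos ⟨hac, hint⟩, ENNReal.toReal_ofReal (integral_llr_nonneg' π μ hac hint)]
  set f : Ω → ℝ := fun ω ↦ Q ω / lam with hf
  have hfmeas : Measurable f := hQmeas.div_const lam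
  have hfbdd : ∀ ω, |f ω| ≤ C / lam := fun ω ↦ by
    rw [hf, abs_div, abs_of_pos hlam]
    exact (div_le_div_iff_of_pos_right hlam).mpr (hQbdd ω)
  -- integrability of f w.r.t. π
  have hfπ : Integrable f π := by
    refine Integrable.mono' (integrable_const (C / lam)) hfmeas.aestronglyMeasurable ?_
    filter_upwards with ω using hfbdd ω
  -- integrability of exp ∘ f w.r.t. μ
  have hexp : Integrable (fun ω ↦ Real.exp (f ω)) μ := by
    refine Integrable.mono' (integrable_const (Real.exp (C / lam)))
      (Real.measurable_exp.comp hfmeas).aestronglyMeasurable ?_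
    filter_upwards with ω
    rw [Real.norm_eq_abs, abs_of_pos (Real.exp_pos _)]
    exact Real.exp_le_exp.mpr ((abs_le.mp (hfbdd ω)).2)
  have htilted : IsProbabilityMeasure (μ.tilted f) := isProbabilityMeasure_tilted hexp
  have hac' : π ≪ μ.tilted f := hac.trans (absolutelyContinuous_tilted hexp)
  have hint' : Integrable (llr π (μ.tilted f)) π :=
    integrable_llr_tilted_right hac hfπ hint hexp
  have hkey : ∫ ω, llr π (μ.tilted f) ω ∂π
      = ∫ ω, llr π μ ω ∂π - ∫ ω, f ω ∂π + Real.log (∫ ω, Real.exp (f ω) ∂μ) :=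
    integral_llr_tilted_right hac hfπ hexp hint
  have hnonneg : 0 ≤ ∫ ω, llr π (μ.tilted f) ω ∂π :=
    integral_llr_nonneg' π (μ.tilted f) hac' hint'
  rw [hkey] at hnonneg
  have hQint : ∫ ω, f ω ∂π = (∫ ω, Q ω ∂π) / lam := by
    simp only [hf, integral_div]
  rw [hQint] at hnonneg
  rw [hKLval]
  have : (∫ ω, Q ω ∂π) / lam ≤ ∫ ω, llr π μ ω ∂π + Real.log (∫ ω, Real.exp (Q ω / lam) ∂μ) := by
    have := hnonneg
    simp only [hf] at this
    linarith
  have h2 := mul_le_mul_of_nonneg_left this hlam.le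
  rw [mul_div_cancel₀ _ hlam.ne'] at h2
  linarith [h2, mul_le_mul_of_nonneg_left (le_refl (∫ ω, llr π μ ω ∂π)) hlam.le]
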